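/- Let V be an oriented 4-dimensional real inner product space, J a self-dual orthogonal complex structure with 2-form α(x,y) = ⟨Jx, y⟩, L an anti-self-dual orthogonal complex structure with 2-form β(x,y) = ⟨Lx, y⟩, and let P be a 2-dimensional subspace of V with a chosen orientation. Then there exists a positively oriented orthonormal basis (e₁,e₂,e₃,e₄) of V such that (e₁,e₂) is a positively oriented orthonormal basis of P, and there exist real numbers η₁, ζ₁, η₂, ζ₂ with η₁² + ζ₁² = 1, η₂² + ζ₂² = 1, η₁ = α(e₁,e₂), η₂ = β(e₁,e₂), such that the matrix (α(e_A,e_B)) equals [[0, η₁, ζ₁, 0], [−η₁, 0, 0, −ζ₁], [−ζ₁, 0, 0, η₁], [0, ζ₁, −η₁, 0]] and the matrix (β(e_A,e_B)) equals [[0, η₂, ζ₂, 0], [−η₂, 0, 0, ζ₂], [−ζ₂, 0, 0, −η₂], [0, −ζ₂, η₂, 0]]. -/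

import Mathlib

open scoped RealInnerProductSpace

open Module

section Aux

variable {V : Type*} [NormedAddCommGroup V] [InnerProductSpace ℝ V]

private theorem snf_rowsq (J : V →ₗ[ℝ] V) (hJo : ∀ x y : V, ⟪J x, J y⟫ = ⟪x, y⟫)
    (e : OrthonormalBasis (Fin 4) ℝ V) (A : Fin 4) :
    ⟪J (e A), e 0⟫^2 + ⟪J (e A), e 1⟫^2 + ⟪J (e A), e 2⟫^2 + ⟪J (e A), e 3⟫^2 = 1 := by
  have h := e.sum_inner_mul_inner (J (e A)) (J (e A))
  rw [hJo, real_inner_self_eq_norm_sq, e.orthonormal.1 A] at h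
  rw [Fin.sum_univ_four] at h
  have hc : ∀ i : Fin 4, ⟪e i, J (e A)⟫ = ⟪J (e A), e i⟫ := fun i => real_inner_comm _ _
  rw [hc 0, hc 1, hc 2, hc 3] at h
  linear_combination h

private theorem snf_anti (J : V →ₗ[ℝ] V) (hJ2 : ∀ x : V, J (J x) = -x)
    (hJo : ∀ x y : V, ⟪J x, J y⟫ = ⟪x, y⟫) (x y : V) : ⟪J x, y⟫ = -⟪J y, x⟫ := by
  have h := hJo x (J y)
  rw [hJ2, inner_neg_right] at h
  have h2 := real_inner_comm x (J y)
  linarith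

set_option maxHeartbeats 1000000 in
private theorem snf_rel (J : V →ₗ[ℝ] V) (hJ2 : ∀ x : V, J (J x) = -x)
    (hJo : ∀ x y : V, ⟪J x, J y⟫ = ⟪x, y⟫) (e : OrthonormalBasis (Fin 4) ℝ V)
    (ε : ℝ) (hε : ε^2 = 1)
    (hpf : ⟪J (e 0), e 1⟫ * ⟪J (e 2), e 3⟫ - ⟪J (e 0), e 2⟫ * ⟪J (e 1), e 3⟫ +
      ⟪J (e 0), e 3⟫ * ⟪J (e 1), e 2⟫ = ε) :
    ⟪J (e 2), e 3⟫ = ε * ⟪J (e 0), e 1⟫ ∧ ⟪J (e 1), e 3⟫ = -(ε * ⟪J (e 0), e 2⟫) ∧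
      ⟪J (e 1), e 2⟫ = ε * ⟪J (e 0), e 3⟫ := by
  have hanti := snf_anti J hJ2 hJo
  have hdiag : ∀ x : V, ⟪J x, x⟫ = 0 := fun x => by have := hanti x x; linarith
  have h1 := snf_rowsq J hJo e 0
  have h2 := snf_rowsq J hJo e 1
  have h3 := snf_rowsq J hJo e 2
  have h4 := snf_rowsq J hJo e 3
  rw [hdiag (e 0)] at h1
  rw [hanti (e 1) (e 0), hdiag (e 1)] at h2
  rw [hanti (e 2) (e 0), hanti (e 2) (e 1), hdiag (e 2)] at h3
  rw [hanti (e 3) (e 0), hanti (e 3) (e 1), hanti (e 3) (e 2), hdiag (e 3)] at h4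
  set a := ⟪J (e 0), e 1⟫; set b := ⟪J (e 0), e 2⟫; set c := ⟪J (e 0), e 3⟫
  set d := ⟪J (e 1), e 2⟫; set e' := ⟪J (e 1), e 3⟫; set f := ⟪J (e 2), e 3⟫
  have key : (f - ε*a)^2 + (e' + ε*b)^2 + (d - ε*c)^2 = 0 := by
    linear_combination ((1:ℝ)/2)*h1 + ((1:ℝ)/2)*h2 + ((1:ℝ)/2)*h3 + ((1:ℝ)/2)*h4
      + (a^2+b^2+c^2-2)*hε - (2*ε)*hpf
  refine ⟨?_, ?_, ?_⟩ <;>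
    nlinarith [sq_nonneg (f - ε*a), sq_nonneg (e' + ε*b), sq_nonneg (d - ε*c)]

private theorem snf_theta (b c : ℝ) : ∃ θ : ℝ, c * Real.cos θ = b * Real.sin θ := by
  by_cases hz : (⟨b, c⟩ : ℂ) = 0
  · exact ⟨0, by simp [Complex.ext_iff] at hz; simp [hz.1, hz.2]⟩
  · refine ⟨Complex.arg ⟨b, c⟩, ?_⟩
    rw [Complex.cos_arg hz, Complex.sin_arg]
    ring

set_option maxHeartbeats 1000000 in
private theorem snf_rot4 (hd : finrank ℝ V = 4) (g : OrthonormalBasis (Fin 4) ℝ V)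
    (p q s t : ℝ) (hpq : p^2 + q^2 = 1) (hst : s^2 + t^2 = 1) :
    ∃ e : OrthonormalBasis (Fin 4) ℝ V,
      e 0 = p • g 0 + q • g 1 ∧ e 1 = -q • g 0 + p • g 1 ∧
      e 2 = s • g 2 + t • g 3 ∧ e 3 = -t • g 2 + s • g 3 ∧
      e.toBasis.orientation = g.toBasis.orientation := by
  have hgo := orthonormal_iff_ite.mp g.orthonormal
  have hg : ∀ i j : Fin 4, ⟪g i, g j⟫ = if i = j then (1:ℝ) else 0 := fun i j => by
    rw [hgo i j]
  set w : Fin 4 → V := ![p • g 0 + q • g 1, -q • g 0 + p • g 1,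
    s • g 2 + t • g 3, -t • g 2 + s • g 3] with hwdef
  have hw0 : w 0 = p • g 0 + q • g 1 := rfl
  have hw1 : w 1 = -q • g 0 + p • g 1 := rfl
  have hw2 : w 2 = s • g 2 + t • g 3 := rfl
  have hw3 : w 3 = -t • g 2 + s • g 3 := rfl
  have hinner : ∀ i j : Fin 4, ⟪w i, w j⟫ = if i = j then (1:ℝ) else 0 := by
    intro i j
    fin_cases i <;> fin_cases j <;>
      simp only [Fin.reduceFinMk, Fin.zero_eta, Fin.mk_one, Fin.isValue, hw0, hw1, hw2, hw3,
        inner_add_left, inner_add_right, real_inner_smul_left, real_inner_smul_right, hg,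
        Fin.reduceEq, ite_true, ite_false] <;>
      norm_num <;>
      linarith [hpq, hst]
  have hw : Orthonormal ℝ w := orthonormal_iff_ite.mpr hinner
  have hcard : Fintype.card (Fin 4) = finrank ℝ V := by simp [hd]
  let b := basisOfOrthonormalOfCardEqFinrank hw hcard
  have hb : ⇑b = w := coe_basisOfOrthonormalOfCardEqFinrank hw hcard
  have hbon : Orthonormal ℝ b := by rwa [hb]
  refine ⟨b.toOrthonormalBasis hbon, ?_, ?_, ?_, ?_, ?_⟩
  · rw [Basis.coe_toOrthonormalBasis, hb]; exact hw0
  · rw [Basis.coe_toOrthonormalBasis, hb]; exact hw1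
  · rw [Basis.coe_toOrthonormalBasis, hb]; exact hw2
  · rw [Basis.coe_toOrthonormalBasis, hb]; exact hw3
  · rw [b.toBasis_toOrthonormalBasis]
    symm
    rw [Basis.orientation_eq_iff_det_pos]
    have hdet : g.toBasis.det ⇑b = 1 := by
      rw [Basis.det_apply]
      have hM : g.toBasis.toMatrix ⇑b = !![p, -q, 0, 0; q, p, 0, 0; 0, 0, s, -t; 0, 0, t, s] := by
        ext i j
        fin_cases i <;> fin_cases j <;>
          simp [Basis.toMatrix_apply, OrthonormalBasis.coe_toBasis_repr_apply,
            OrthonormalBasis.repr_apply_apply, hb, hw0, hw1, hw2, hw3,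
            inner_add_right, real_inner_smul_right, hg, Matrix.vecHead, Matrix.vecTail]
      rw [hM]
      simp [Matrix.det_succ_row_zero, Fin.sum_univ_succ,
        show (Fin.succAbove 1 2 : Fin 4) = 3 from rfl]
      linear_combination (s^2 + t^2) * hpq + hst
    rw [hdet]
    norm_num

set_option maxHeartbeats 1000000 in
private theorem snf_rot2 (hd : finrank ℝ V = 2) (g : OrthonormalBasis (Fin 2) ℝ V)
    (p q : ℝ) (hpq : p^2 + q^2 = 1) :
    ∃ e : OrthonormalBasis (Fin 2) ℝ V,
      e 0 = p • g 0 + q • g 1 ∧ e 1 = -q • g 0 + p • g 1 ∧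
      e.toBasis.orientation = g.toBasis.orientation := by
  have hgo := orthonormal_iff_ite.mp g.orthonormal
  have hg : ∀ i j : Fin 2, ⟪g i, g j⟫ = if i = j then (1:ℝ) else 0 := fun i j => by
    rw [hgo i j]
  set w : Fin 2 → V := ![p • g 0 + q • g 1, -q • g 0 + p • g 1] with hwdef
  have hw0 : w 0 = p • g 0 + q • g 1 := rfl
  have hw1 : w 1 = -q • g 0 + p • g 1 := rfl
  have hinner : ∀ i j : Fin 2, ⟪w i, w j⟫ = if i = j then (1:ℝ) else 0 := by
    intro i j
    fin_cases i <;> fin_cases j <;>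
      simp only [Fin.reduceFinMk, Fin.zero_eta, Fin.mk_one, Fin.isValue, hw0, hw1,
        inner_add_left, inner_add_right, real_inner_smul_left, real_inner_smul_right, hg,
        Fin.reduceEq, ite_true, ite_false] <;>
      norm_num <;>
      linarith [hpq]
  have hw : Orthonormal ℝ w := orthonormal_iff_ite.mpr hinner
  have hcard : Fintype.card (Fin 2) = finrank ℝ V := by simp [hd]
  let b := basisOfOrthonormalOfCardEqFinrank hw hcard
  have hb : ⇑b = w := coe_basisOfOrthonormalOfCardEqFinrank hw hcard
  have hbon : Orthonormal ℝ b := by rwa [hb]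
  refine ⟨b.toOrthonormalBasis hbon, ?_, ?_, ?_⟩
  · rw [Basis.coe_toOrthonormalBasis, hb]; exact hw0
  · rw [Basis.coe_toOrthonormalBasis, hb]; exact hw1
  · rw [b.toBasis_toOrthonormalBasis]
    symm
    rw [Basis.orientation_eq_iff_det_pos]
    have hdet : g.toBasis.det ⇑b = 1 := by
      rw [Basis.det_apply]
      have hM : g.toBasis.toMatrix ⇑b = !![p, -q; q, p] := by
        ext i j
        fin_cases i <;> fin_cases j <;>
          simp [Basis.toMatrix_apply, OrthonormalBasis.coe_toBasis_repr_apply,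
            OrthonormalBasis.repr_apply_apply, hb, hw0, hw1,
            inner_add_right, real_inner_smul_right, hg, Matrix.vecHead, Matrix.vecTail]
      rw [hM, Matrix.det_fin_two_of]
      linear_combination hpq
    rw [hdet]
    norm_num

set_option maxHeartbeats 1000000 in
private theorem snf_flip4 (hd : finrank ℝ V = 4) (g : OrthonormalBasis (Fin 4) ℝ V) :
    ∃ e : OrthonormalBasis (Fin 4) ℝ V,
      e 0 = g 0 ∧ e 1 = g 1 ∧ e.toBasis.orientation = -g.toBasis.orientation := by
  have hgo := orthonormal_iff_ite.mp g.orthonormal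
  have hg : ∀ i j : Fin 4, ⟪g i, g j⟫ = if i = j then (1:ℝ) else 0 := fun i j => by
    rw [hgo i j]
  set w : Fin 4 → V := ![g 0, g 1, g 2, -g 3] with hwdef
  have hw0 : w 0 = g 0 := rfl
  have hw1 : w 1 = g 1 := rfl
  have hw2 : w 2 = g 2 := rfl
  have hw3 : w 3 = -g 3 := rfl
  have hinner : ∀ i j : Fin 4, ⟪w i, w j⟫ = if i = j then (1:ℝ) else 0 := by
    intro i j
    fin_cases i <;> fin_cases j <;>
      simp only [Fin.reduceFinMk, Fin.zero_eta, Fin.mk_one, Fin.isValue, hw0, hw1, hw2, hw3,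
        inner_neg_left, inner_neg_right, hg, Fin.reduceEq, ite_true, ite_false] <;>
      norm_num
  have hw : Orthonormal ℝ w := orthonormal_iff_ite.mpr hinner
  have hcard : Fintype.card (Fin 4) = finrank ℝ V := by simp [hd]
  let b := basisOfOrthonormalOfCardEqFinrank hw hcard
  have hb : ⇑b = w := coe_basisOfOrthonormalOfCardEqFinrank hw hcard
  have hbon : Orthonormal ℝ b := by rwa [hb]
  have hdet : g.toBasis.det ⇑b = -1 := by
    rw [Basis.det_apply]
    have hM : g.toBasis.toMatrix ⇑b = !![1, 0, 0, 0; 0, 1, 0, 0; 0, 0, 1, 0; 0, 0, 0, -1] := by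
      ext i j
      fin_cases i <;> fin_cases j <;>
        simp [Basis.toMatrix_apply, OrthonormalBasis.coe_toBasis_repr_apply,
          OrthonormalBasis.repr_apply_apply, hb, hw0, hw1, hw2, hw3,
          inner_neg_right, hg, Matrix.vecHead, Matrix.vecTail]
    rw [hM]
    simp [Matrix.det_succ_row_zero, Fin.sum_univ_succ]
  refine ⟨b.toOrthonormalBasis hbon, ?_, ?_, ?_⟩
  · rw [Basis.coe_toOrthonormalBasis, hb]; exact hw0
  · rw [Basis.coe_toOrthonormalBasis, hb]; exact hw1
  · rw [b.toBasis_toOrthonormalBasis]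
    rcases b.orientation_eq_or_eq_neg g.toBasis.orientation with h | h
    · exfalso
      rw [Basis.orientation_eq_iff_det_pos, hdet] at h
      · linarith
    · rw [h]; exact (neg_neg b.orientation).symm

end Aux

set_option maxHeartbeats 4000000

/-- Simultaneous normal form (Proposition 3 of the paper): given a self-dual orthogonal
complex structure `J` (with form `α`), an anti-self-dual orthogonal complex structure `L`
(with form `β`), and an oriented two-plane `P`, there is a positively oriented orthonormal
basis `(e₁,e₂,e₃,e₄)` of `V` whose first two vectors form a positively oriented orthonormal
basis of `P`, in which `α` and `β` take the standard matrix forms determined by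
`η₁ = α(e₁,e₂)` and `η₂ = β(e₁,e₂)`. -/
theorem simultaneous_normal_form
    {V : Type*} [NormedAddCommGroup V] [InnerProductSpace ℝ V]
    (hdim : Module.finrank ℝ V = 4)
    (o : Orientation ℝ V (Fin 4))
    (J L : V →ₗ[ℝ] V)
    (hJ2 : ∀ x : V, J (J x) = -x) (hJo : ∀ x y : V, ⟪J x, J y⟫ = ⟪x, y⟫)
    (hL2 : ∀ x : V, L (L x) = -x) (hLo : ∀ x y : V, ⟪L x, L y⟫ = ⟪x, y⟫)
    (hJsd : ∀ e : OrthonormalBasis (Fin 4) ℝ V, e.toBasis.orientation = o →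
      ⟪J (e 0), e 1⟫ * ⟪J (e 2), e 3⟫ - ⟪J (e 0), e 2⟫ * ⟪J (e 1), e 3⟫ +
        ⟪J (e 0), e 3⟫ * ⟪J (e 1), e 2⟫ = 1)
    (hLasd : ∀ e : OrthonormalBasis (Fin 4) ℝ V, e.toBasis.orientation = o →
      ⟪L (e 0), e 1⟫ * ⟪L (e 2), e 3⟫ - ⟪L (e 0), e 2⟫ * ⟪L (e 1), e 3⟫ +
        ⟪L (e 0), e 3⟫ * ⟪L (e 1), e 2⟫ = -1)
    (P : Submodule ℝ V) (hP : Module.finrank ℝ P = 2)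
    (oP : Orientation ℝ P (Fin 2)) :
    ∃ (e : OrthonormalBasis (Fin 4) ℝ V) (f : OrthonormalBasis (Fin 2) ℝ P)
      (η₁ ζ₁ η₂ ζ₂ : ℝ),
      e.toBasis.orientation = o ∧ f.toBasis.orientation = oP ∧
      (f 0 : V) = e 0 ∧ (f 1 : V) = e 1 ∧
      η₁ ^ 2 + ζ₁ ^ 2 = 1 ∧ η₂ ^ 2 + ζ₂ ^ 2 = 1 ∧
      η₁ = ⟪J (e 0), e 1⟫ ∧ η₂ = ⟪L (e 0), e 1⟫ ∧
      (∀ A B : Fin 4, ⟪J (e A), e B⟫ =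
        !![0, η₁, ζ₁, 0; -η₁, 0, 0, -ζ₁; -ζ₁, 0, 0, η₁; 0, ζ₁, -η₁, 0] A B) ∧
      (∀ A B : Fin 4, ⟪L (e A), e B⟫ =
        !![0, η₂, ζ₂, 0; -η₂, 0, 0, ζ₂; -ζ₂, 0, 0, -η₂; 0, -ζ₂, η₂, 0] A B) := by
  haveI hfdV : FiniteDimensional ℝ V := FiniteDimensional.of_finrank_eq_succ (n := 3) (by omega)
  -- orthonormal basis of P with the right orientation
  let f0 : OrthonormalBasis (Fin 2) ℝ P := (stdOrthonormalBasis ℝ P).reindex (finCongr hP)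
  let f1 : OrthonormalBasis (Fin 2) ℝ P := f0.adjustToOrientation oP
  have hf1or : f1.toBasis.orientation = oP := f0.orientation_adjustToOrientation oP
  have horthP : Orthonormal ℝ (fun i : Fin 2 => (f1 i : V)) := by
    rw [orthonormal_iff_ite]
    intro i j
    rw [← Submodule.coe_inner]
    exact orthonormal_iff_ite.mp f1.orthonormal i j
  -- extend to an orthonormal basis of V
  set v : Fin 4 → V := ![(f1 0 : V), (f1 1 : V), 0, 0] with hv
  have hv0 : v 0 = (f1 0 : V) := rfl
  have hv1 : v 1 = (f1 1 : V) := rfl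
  have hres : Orthonormal ℝ (({0, 1} : Set (Fin 4)).restrict v) := by
    let emap : ({0, 1} : Set (Fin 4)) → Fin 2 := fun x => if (x : Fin 4) = 0 then 0 else 1
    have heq : (({0, 1} : Set (Fin 4)).restrict v) = (fun i : Fin 2 => (f1 i : V)) ∘ emap := by
      funext x
      rcases x with ⟨x, hx⟩
      simp only [Set.mem_insert_iff, Set.mem_singleton_iff] at hx
      rcases hx with rfl | rfl <;> simp [emap, v] <;> rfl
    rw [heq]
    apply horthP.comp
    rintro ⟨x, hx⟩ ⟨y, hy⟩ hxy
    simp only [Set.mem_insert_iff, Set.mem_singleton_iff] at hx hy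
    apply Subtype.ext
    rcases hx with rfl | rfl <;> rcases hy with rfl | rfl <;>
      simp_all [emap]
  obtain ⟨h, hh⟩ := hres.exists_orthonormalBasis_extension_of_card_eq (by simp [hdim])
  have h0 : h 0 = (f1 0 : V) := (hh 0 (by simp)).trans hv0
  have h1 : h 1 = (f1 1 : V) := (hh 1 (by simp)).trans hv1
  -- fix the orientation
  obtain ⟨g, hg0, hg1, hgor⟩ : ∃ g : OrthonormalBasis (Fin 4) ℝ V,
      g 0 = (f1 0 : V) ∧ g 1 = (f1 1 : V) ∧ g.toBasis.orientation = o := by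
    rcases h.toBasis.orientation_eq_or_eq_neg o with ho | ho
    · exact ⟨h, h0, h1, ho.symm⟩
    · obtain ⟨g, hg0, hg1, hgor⟩ := snf_flip4 hdim h
      exact ⟨g, hg0.trans h0, hg1.trans h1, hgor.trans ho.symm⟩
  -- normal-form relations in the basis g
  have hJrelg := snf_rel J hJ2 hJo g 1 (by norm_num) (hJsd g hgor)
  have hLrelg := snf_rel L hL2 hLo g (-1) (by norm_num) (hLasd g hgor)
  -- choice of angles
  obtain ⟨θ₁, hθ₁⟩ := snf_theta ⟪J (g 0), g 2⟫ ⟪J (g 0), g 3⟫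
  obtain ⟨θ₂, hθ₂⟩ := snf_theta ⟪L (g 0), g 2⟫ ⟪L (g 0), g 3⟫
  set ψ := (θ₁ - θ₂) / 2 with hψ
  set φ := (θ₁ + θ₂) / 2 with hφ
  set p := Real.cos ψ with hp
  set q := Real.sin ψ with hq
  set s := Real.cos φ with hs
  set t := Real.sin φ with ht
  have hpq : p ^ 2 + q ^ 2 = 1 := by rw [hp, hq, add_comm]; exact Real.sin_sq_add_cos_sq ψ
  have hst : s ^ 2 + t ^ 2 = 1 := by rw [hs, ht, add_comm]; exact Real.sin_sq_add_cos_sq φ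
  have hsum : ψ + φ = θ₁ := by rw [hψ, hφ]; ring
  have hdiff : φ - ψ = θ₂ := by rw [hψ, hφ]; ring
  have hs1 : Real.sin θ₁ = q * s + p * t := by rw [← hsum, Real.sin_add]; try ring
  have hc1 : Real.cos θ₁ = p * s - q * t := by rw [← hsum, Real.cos_add]; try ring
  have hs2 : Real.sin θ₂ = t * p - s * q := by rw [← hdiff, Real.sin_sub]; try ring
  have hc2 : Real.cos θ₂ = s * p + t * q := by rw [← hdiff, Real.cos_sub]; try ring
  -- the rotated bases
  obtain ⟨e, he0, he1, he2, he3, heor⟩ := snf_rot4 hdim g p q s t hpq hst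
  obtain ⟨f, hf0, hf1, hfor⟩ := snf_rot2 hP f1 p q hpq
  have heoro : e.toBasis.orientation = o := heor.trans hgor
  have hforP : f.toBasis.orientation = oP := hfor.trans hf1or
  have hcoe0 : (f 0 : V) = e 0 := by
    rw [hf0, he0]
    push_cast
    rw [hg0, hg1]
  have hcoe1 : (f 1 : V) = e 1 := by
    rw [hf1, he1]
    push_cast
    rw [hg0, hg1]
  -- the (0,3) entries vanish
  have hJ03 : ⟪J (e 0), e 3⟫ = 0 := by
    rw [he0, he3]
    simp only [map_add, LinearMap.map_smul, inner_add_left, inner_add_right,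
      real_inner_smul_left, real_inner_smul_right]
    rw [hJrelg.2.1, hJrelg.2.2]
    have hθ' : ⟪J (g 0), g 3⟫ * (p * s - q * t) = ⟪J (g 0), g 2⟫ * (q * s + p * t) := by
      rw [← hc1, ← hs1]; exact hθ₁
    linear_combination hθ'
  have hL03 : ⟪L (e 0), e 3⟫ = 0 := by
    rw [he0, he3]
    simp only [map_add, LinearMap.map_smul, inner_add_left, inner_add_right,
      real_inner_smul_left, real_inner_smul_right]
    rw [hLrelg.2.1, hLrelg.2.2]
    have hθ' : ⟪L (g 0), g 3⟫ * (s * p + t * q) = ⟪L (g 0), g 2⟫ * (t * p - s * q) := by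
      rw [← hc2, ← hs2]; exact hθ₂
    linear_combination hθ'
  -- relations in the final basis
  have hJrele := snf_rel J hJ2 hJo e 1 (by norm_num) (hJsd e heoro)
  have hLrele := snf_rel L hL2 hLo e (-1) (by norm_num) (hLasd e heoro)
  have hJanti := snf_anti J hJ2 hJo
  have hLanti := snf_anti L hL2 hLo
  have hJdiag : ∀ x : V, ⟪J x, x⟫ = 0 := fun x => by have := hJanti x x; linarith
  have hLdiag : ∀ x : V, ⟪L x, x⟫ = 0 := fun x => by have := hLanti x x; linarith
  have hJunit : ⟪J (e 0), e 1⟫ ^ 2 + ⟪J (e 0), e 2⟫ ^ 2 = 1 := by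
    have hr := snf_rowsq J hJo e 0
    rw [hJdiag (e 0), hJ03] at hr
    norm_num at hr
    exact hr
  have hLunit : ⟪L (e 0), e 1⟫ ^ 2 + ⟪L (e 0), e 2⟫ ^ 2 = 1 := by
    have hr := snf_rowsq L hLo e 0
    rw [hLdiag (e 0), hL03] at hr
    norm_num at hr
    exact hr
  refine ⟨e, f, ⟪J (e 0), e 1⟫, ⟪J (e 0), e 2⟫, ⟪L (e 0), e 1⟫, ⟪L (e 0), e 2⟫,
    heoro, hforP, hcoe0, hcoe1, hJunit, hLunit, rfl, rfl, ?_, ?_⟩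
  · intro A B
    fin_cases A <;> fin_cases B <;>
      simp <;>
      linarith [hJdiag (e 0), hJdiag (e 1), hJdiag (e 2), hJdiag (e 3),
        hJanti (e 0) (e 1), hJanti (e 0) (e 2), hJanti (e 0) (e 3),
        hJanti (e 1) (e 2), hJanti (e 1) (e 3), hJanti (e 2) (e 3),
        hJ03, hJrele.1, hJrele.2.1, hJrele.2.2]
  · intro A B
    fin_cases A <;> fin_cases B <;>
      simp <;>
      linarith [hLdiag (e 0), hLdiag (e 1), hLdiag (e 2), hLdiag (e 3),
        hLanti (e 0) (e 1), hLanti (e 0) (e 2), hLanti (e 0) (e 3),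
        hLanti (e 1) (e 2), hLanti (e 1) (e 3), hLanti (e 2) (e 3),
        hL03, hLrele.1, hLrele.2.1, hLrele.2.2]
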